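/- Let ${}_T M_R$ be a biseparable bimodule. If $T$ is a semisimple ring, then $R$ is a semisimple ring, and conversely. -/

import Mathlib

open MulOpposite

section BimodulePrelims

universe u v w

variable {T : Type u} {R : Type v} {M : Type w} [Ring T] [Ring R]
variable [AddCommGroup M] [Module T M] [Module Rᵐᵒᵖ M] [SMulCommClass T Rᵐᵒᵖ M]

/-- The left dual `*M = Hom(_T M, _T T)` of a `(T,R)`-bimodule `M`. -/
abbrev LDual (T : Type*) [Ring T] (M : Type*) [AddCommGroup M] [Module T M] :=
  M →ₗ[T] T

/-- The right dual `M^* = Hom(M_R, R_R)` of a `(T,R)`-bimodule `M`. -/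
abbrev RDual (R : Type*) [Ring R] (M : Type*) [AddCommGroup M] [Module Rᵐᵒᵖ M] :=
  M →ₗ[Rᵐᵒᵖ] R

/-- The left `R`-action on `*M`: `(r·f)(m) = f(m·r)`. -/
def LDual.lR (r : R) (f : LDual T M) : LDual T M where
  toFun m := f (op r • m)
  map_add' a b := by show f (op r • (a + b)) = _; rw [smul_add, map_add]
  map_smul' t m := by
    show f (op r • t • m) = t • f (op r • m)
    rw [← smul_comm t (op r) m, map_smul]

/-- The right `T`-action on `*M`: `(f·t)(m) = f(m) t`. -/
def LDual.rT (t : T) (f : LDual T M) : LDual T M where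
  toFun m := f m * t
  map_add' a b := by show f (a + b) * t = _; rw [map_add, add_mul]
  map_smul' s m := by
    show f (s • m) * t = s • (f m * t)
    rw [map_smul, smul_eq_mul, smul_eq_mul, mul_assoc]

/-- The left `R`-action on `M^*`: `(r·h)(m) = r h(m)`. -/
def RDual.lR (r : R) (h : RDual R M) : RDual R M where
  toFun m := r * h m
  map_add' a b := by show r * h (a + b) = _; rw [map_add, mul_add]
  map_smul' s m := by
    show r * h (s • m) = s • (r * h m)
    rw [map_smul, MulOpposite.smul_eq_mul_unop, MulOpposite.smul_eq_mul_unop, mul_assoc]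

/-- The right `T`-action on `M^*`: `(h·t)(m) = h(t·m)`. -/
def RDual.rT (t : T) (h : RDual R M) : RDual R M where
  toFun m := h (t • m)
  map_add' a b := by show h (t • (a + b)) = _; rw [smul_add, map_add]
  map_smul' s m := by
    show h (t • s • m) = s • h (t • m)
    rw [smul_comm t s m, map_smul]

variable (T R M) in
/-- `M` is a separable bimodule (`T` is `M`-separable over `R`): there is an
`M`-separability element `e = ∑ᵢ mᵢ ⊗ fᵢ ∈ M ⊗_R *M` with `∑ᵢ (mᵢ)fᵢ = 1_T`
and `t·e = e·t` for all `t`, centrality in the tensor product over `R` being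
detected by all `R`-balanced biadditive maps. -/
def IsSepBimod : Prop :=
  ∃ (n : ℕ) (m : Fin n → M) (f : Fin n → LDual T M),
    (∑ i, f i (m i)) = 1 ∧
    ∀ (Z : Type (max u v w)) [AddCommGroup Z] (b : M → LDual T M → Z),
      (∀ x y g, b (x + y) g = b x g + b y g) →
      (∀ x g g', b x (g + g') = b x g + b x g') →
      (∀ (r : R) x g, b (op r • x) g = b x (LDual.lR r g)) →
      ∀ t : T, (∑ i, b (t • m i) (f i)) = ∑ i, b (m i) (LDual.rT t (f i))

variable (T R M) in
/-- `M^*` is a separable bimodule: the evaluation `M^* ⊗_T M → R`, `h ⊗ m ↦ h(m)`,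
splits as an `R`-bimodule map, i.e. there is `e = ∑ᵢ hᵢ ⊗ mᵢ ∈ M^* ⊗_T M`
with `∑ᵢ hᵢ(mᵢ) = 1_R` which is `R`-central (centrality in the tensor product
over `T` being detected by all `T`-balanced biadditive maps). -/
def IsSepRDual : Prop :=
  ∃ (n : ℕ) (h : Fin n → RDual R M) (m : Fin n → M),
    (∑ i, h i (m i)) = 1 ∧
    ∀ (Z : Type (max u v w)) [AddCommGroup Z] (b : RDual R M → M → Z),
      (∀ x y g, b (x + y) g = b x g + b y g) →
      (∀ x g g', b x (g + g') = b x g + b x g') →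
      (∀ (t : T) x g, b (RDual.rT t x) g = b x (t • g)) →
      ∀ r : R, (∑ i, b (RDual.lR r (h i)) (m i)) = ∑ i, b (h i) (op r • m i)

/-- A module is finitely generated projective. -/
def IsFGProj (A N : Type*) [Ring A] [AddCommGroup N] [Module A N] : Prop :=
  Module.Finite A N ∧ Module.Projective A N

variable (T R M) in
/-- `M` is a biseparable `(T,R)`-bimodule: `_T M` and `M_R` are finitely generated
projective and both `M` and `M^*` are separable bimodules. -/
def IsBisep : Prop :=
  IsFGProj T M ∧ IsFGProj Rᵐᵒᵖ M ∧ IsSepBimod T R M ∧ IsSepRDual T R M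

variable (T R M) in
/-- `M` is a Frobenius `(T,R)`-bimodule: `_T M` and `M_R` are finitely generated
projective and `*M ≅ M^*` as `(R,T)`-bimodules. -/
def IsFrobBimod : Prop :=
  IsFGProj T M ∧ IsFGProj Rᵐᵒᵖ M ∧
  ∃ φ : RDual R M ≃+ LDual T M,
    (∀ (r : R) (h : RDual R M), φ (RDual.lR r h) = LDual.lR r (φ h)) ∧
    (∀ (t : T) (h : RDual R M), φ (RDual.rT t h) = LDual.rT t (φ h))

end BimodulePrelims

section Aux

universe u v w

/-- Splitting of surjections onto semisimple-source? (source semisimple). -/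
theorem splitSurj {A X Y : Type*} [Ring A] [AddCommGroup X] [Module A X]
    [AddCommGroup Y] [Module A Y] [IsSemisimpleModule A X]
    (q : X →ₗ[A] Y) (hq : Function.Surjective q) :
    ∃ σ : Y →ₗ[A] X, ∀ y, q (σ y) = y := by
  obtain ⟨C, hC⟩ := exists_isCompl (LinearMap.ker q)
  have hbij : Function.Bijective (q.comp C.subtype) := by
    constructor
    · intro x y hxy
      have : (x - y : X) ∈ LinearMap.ker q ⊓ C := by
        refine ⟨?_, by simpa using sub_mem x.2 y.2⟩
        simpa [LinearMap.mem_ker, map_sub, sub_eq_zero] using hxy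
      rw [hC.inf_eq_bot] at this
      exact Subtype.ext (by simpa [sub_eq_zero] using this)
    · intro y
      obtain ⟨x, rfl⟩ := hq y
      have hx : x ∈ LinearMap.ker q ⊔ C := by rw [hC.sup_eq_top]; trivial
      obtain ⟨u, hu, v, hv, rfl⟩ := Submodule.mem_sup.mp hx
      exact ⟨⟨v, hv⟩, by simp [LinearMap.mem_ker.mp hu]⟩
  let e := LinearEquiv.ofBijective (q.comp C.subtype) hbij
  exact ⟨C.subtype.comp e.symm.toLinearMap, fun y => e.apply_symm_apply y⟩

/-- From a linear right inverse of the quotient map, get a complement. -/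
theorem complOfSection {A : Type*} [Ring A] (L : Submodule A A)
    (s : (A ⧸ L) →ₗ[A] A) (hs : ∀ y, L.mkQ (s y) = y) : ∃ C, IsCompl L C := by
  refine ⟨LinearMap.range s, ⟨?_, ?_⟩⟩
  · rw [disjoint_iff]
    ext x
    simp only [Submodule.mem_inf, Submodule.mem_bot, LinearMap.mem_range]
    constructor
    · rintro ⟨hxL, y, rfl⟩
      have h0 : L.mkQ (s y) = 0 := by
        rw [Submodule.mkQ_apply, Submodule.Quotient.mk_eq_zero]; exact hxL
      rw [hs y] at h0
      rw [h0, map_zero]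
    · rintro rfl; exact ⟨L.zero_mem, 0, map_zero s⟩
  · rw [codisjoint_iff, eq_top_iff]
    intro x _
    have hmem : x - s (L.mkQ x) ∈ L := by
      rw [← Submodule.Quotient.mk_eq_zero, ← Submodule.mkQ_apply, map_sub, hs, sub_self]
    have : x = (x - s (L.mkQ x)) + s (L.mkQ x) := by abel
    exact this ▸ Submodule.add_mem_sup hmem ⟨L.mkQ x, rfl⟩

section Dir1

variable {T : Type u} {R : Type v} {M : Type w} [Ring T] [Ring R]
variable [AddCommGroup M] [Module T M] [Module Rᵐᵒᵖ M] [SMulCommClass T Rᵐᵒᵖ M]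

variable (T R M) in
/-- The left `R`-module structure on `Hom_T(M, N)` by precomposition with the right
`R`-action on `M`. -/
def homModR (N : Type*) [AddCommGroup N] [Module T N] : Module R (M →ₗ[T] N) where
  smul r g :=
    { toFun := fun m => g (op r • m)
      map_add' := fun a b => by
        show g (op r • (a + b)) = g (op r • a) + g (op r • b)
        rw [smul_add, map_add]
      map_smul' := fun t m => by
        show g (op r • t • m) = t • g (op r • m)
        rw [← smul_comm t (op r) m, map_smul] }
  one_smul g := by ext m; show g (op (1 : R) • m) = g m; rw [op_one, one_smul]
  mul_smul r s g := by
    ext m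
    show g (op (r * s) • m) = g (op s • op r • m)
    rw [← mul_smul, ← op_mul]
  smul_zero r := by ext m; rfl
  smul_add r g h := by ext m; rfl
  add_smul r s g := by
    ext m
    show g (op (r + s) • m) = g (op r • m) + g (op s • m)
    rw [op_add, add_smul, map_add]
  zero_smul g := by
    ext m
    show g (op (0 : R) • m) = 0
    rw [op_zero, zero_smul, map_zero]

theorem dir1 (hM : Module.Projective T M) (hsep : IsSepBimod T R M)
    (hR : IsSemisimpleRing R) : IsSemisimpleRing T := by
  obtain ⟨n, mm, f, h1, hc⟩ := hsep
  refine { exists_isCompl := fun L => ?_ }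
  letI : Module R (M →ₗ[T] T) := homModR T R M T
  letI : Module R (M →ₗ[T] (T ⧸ L)) := homModR T R M (T ⧸ L)
  -- the map `Hom_T(M, T) → Hom_T(M, T ⧸ L)` of left `R`-modules
  let q : (M →ₗ[T] T) →ₗ[R] (M →ₗ[T] (T ⧸ L)) :=
    { toFun := fun g => L.mkQ.comp g
      map_add' := fun g h => by ext m; simp
      map_smul' := fun r g => by ext m; rfl }
  haveI := hM
  have hqsurj : Function.Surjective q := by
    intro φ
    obtain ⟨g, hg⟩ := Module.projective_lifting_property L.mkQ φ
      (Submodule.mkQ_surjective L)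
    exact ⟨g, hg⟩
  obtain ⟨σ, hσ⟩ := splitSurj q hqsurj
  -- the T-linear map `m' ↦ f m' • nn`
  let Ψ : (T ⧸ L) → LDual T M → (M →ₗ[T] (T ⧸ L)) := fun nn ff =>
    { toFun := fun m' => ff m' • nn
      map_add' := fun a b => by
        show ff (a + b) • nn = ff a • nn + ff b • nn
        rw [map_add, add_smul]
      map_smul' := fun t m' => by
        show ff (t • m') • nn = t • (ff m' • nn)
        rw [map_smul, smul_eq_mul, mul_smul] }
  let s : (T ⧸ L) → T := fun nn => ∑ i, σ (Ψ nn (f i)) (mm i)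
  have hps : ∀ nn, L.mkQ (s nn) = nn := by
    intro nn
    have : L.mkQ (s nn) = ∑ i, (q (σ (Ψ nn (f i)))) (mm i) := by
      simp only [s, map_sum]; rfl
    rw [this]
    simp only [hσ]
    show (∑ i, f i (mm i) • nn) = nn
    rw [← Finset.sum_smul, h1, one_smul]
  have hadd : ∀ a b, s (a + b) = s a + s b := by
    intro a b
    have hΨ : ∀ ff, Ψ (a + b) ff = Ψ a ff + Ψ b ff := by
      intro ff; ext m'; show ff m' • (a + b) = _; rw [smul_add]; rfl
    simp only [s, hΨ, map_add, LinearMap.add_apply, Finset.sum_add_distrib]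
  have hsmul : ∀ (t : T) nn, s (t • nn) = t • s nn := by
    intro t nn
    have key := hc (ULift.{max v w} T)
      (fun x gg => ULift.up ((σ (Ψ nn gg)) x))
      (fun x y gg => by
        show ULift.up ((σ (Ψ nn gg)) (x + y)) =
          ULift.up ((σ (Ψ nn gg)) x) + ULift.up ((σ (Ψ nn gg)) y)
        rw [map_add]; rfl)
      (fun x gg gg' => by
        show ULift.up ((σ (Ψ nn (gg + gg'))) x) =
          ULift.up ((σ (Ψ nn gg)) x) + ULift.up ((σ (Ψ nn gg')) x)
        have hΨ : Ψ nn (gg + gg') = Ψ nn gg + Ψ nn gg' := by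
          ext m'; show (gg m' + gg' m') • nn = gg m' • nn + gg' m' • nn; rw [add_smul]
        rw [hΨ, map_add, LinearMap.add_apply]; rfl)
      (fun r x gg => by
        show ULift.up ((σ (Ψ nn gg)) (op r • x)) = ULift.up ((σ (Ψ nn (LDual.lR r gg))) x)
        have hΨ : Ψ nn (LDual.lR r gg) = r • Ψ nn gg := by
          ext m'; rfl
        rw [hΨ, LinearMap.map_smul σ r (Ψ nn gg)]; rfl)
      t
    have keyd : (∑ i, (σ (Ψ nn (f i))) (t • mm i)) =
        ∑ i, (σ (Ψ nn (LDual.rT t (f i)))) (mm i) := by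
      have h2 := congrArg (⇑(AddEquiv.ulift (α := T))) key
      simp only [map_sum] at h2; exact h2
    have hL : (∑ i, (σ (Ψ nn (f i))) (t • mm i)) = t • s nn := by
      simp only [map_smul, s, Finset.smul_sum]
    have hR' : (∑ i, (σ (Ψ nn (LDual.rT t (f i)))) (mm i)) = s (t • nn) := by
      have hΨ : ∀ i, Ψ nn (LDual.rT t (f i)) = Ψ (t • nn) (f i) := by
        intro i; ext m'
        show (f i m' * t) • nn = f i m' • (t • nn)
        rw [mul_smul]
      simp only [hΨ]; rfl
    rw [← hR', ← keyd, hL]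
  let sl : (T ⧸ L) →ₗ[T] T :=
    { toFun := s
      map_add' := hadd
      map_smul' := fun t nn => by simpa using hsmul t nn }
  obtain ⟨C, hC⟩ := complOfSection L sl hps
  exact ⟨C, hC⟩

end Dir1

section Dir2

variable {T : Type u} {R : Type v} {M : Type w} [Ring T] [Ring R]
variable [AddCommGroup M] [Module T M] [Module Rᵐᵒᵖ M] [SMulCommClass T Rᵐᵒᵖ M]

theorem RDual.lR_eq_smul (r : R) (h : RDual R M) : RDual.lR r h = r • h := by
  ext m; show r * h m = r • h m; rw [smul_eq_mul]

/-- The right dual of a f.g. projective right module is projective as a left module. -/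
theorem rdualProjective {R : Type v} {M : Type w} [Ring R] [AddCommGroup M] [Module Rᵐᵒᵖ M]
    (hfin : Module.Finite Rᵐᵒᵖ M) (hproj : Module.Projective Rᵐᵒᵖ M) :
    Module.Projective R (RDual R M) := by
  haveI := hproj
  obtain ⟨sF, hsF⟩ := hfin.fg_top
  let π : (sF → Rᵐᵒᵖ) →ₗ[Rᵐᵒᵖ] M :=
    { toFun := fun c => ∑ i, c i • (i : M)
      map_add' := fun c d => by
        show (∑ i, (c i + d i) • (i : M)) = _
        simp [add_smul, Finset.sum_add_distrib]
      map_smul' := fun r c => by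
        show (∑ i, (r • c i) • (i : M)) = r • ∑ i, c i • (i : M)
        rw [Finset.smul_sum]
        exact Finset.sum_congr rfl fun i _ => by rw [smul_eq_mul, mul_smul] }
  have hπ : Function.Surjective π := by
    intro m
    have hm : m ∈ Submodule.span Rᵐᵒᵖ (sF : Set M) := hsF ▸ Submodule.mem_top
    obtain ⟨c, -, hcm⟩ := Submodule.mem_span_finset.mp hm
    refine ⟨fun i => c i, ?_⟩
    show (∑ i : sF, c i • (i : M)) = m
    rw [Finset.sum_coe_sort sF (fun i => c i • i)]
    exact hcm
  obtain ⟨sec, hsec⟩ := Module.projective_lifting_property π LinearMap.id hπ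
  let g : sF → RDual R M := fun i =>
    { toFun := fun m => (sec m i).unop
      map_add' := fun a b => by simp
      map_smul' := fun r m => by
        show (sec (r • m) i).unop = r • (sec m i).unop
        rw [map_smul, Pi.smul_apply, smul_eq_mul, unop_mul, MulOpposite.smul_eq_mul_unop]
      }
  have hdb : ∀ m : M, (∑ i, op ((g i) m) • (i : M)) = m := by
    intro m
    have hs := LinearMap.congr_fun hsec m
    calc (∑ i, op ((g i) m) • (i : M)) = ∑ i, (sec m i) • (i : M) := by
          exact Finset.sum_congr rfl fun i _ => by simp [g]
      _ = m := hs
  let E : RDual R M →ₗ[R] (sF → R) :=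
    { toFun := fun h i => h (i : M)
      map_add' := fun a b => by ext i; simp
      map_smul' := fun r h => by ext i; simp }
  let F : (sF → R) →ₗ[R] RDual R M :=
    { toFun := fun c => ∑ i, c i • g i
      map_add' := fun c d => by
        show (∑ i, (c i + d i) • g i) = _
        simp [add_smul, Finset.sum_add_distrib]
      map_smul' := fun r c => by
        show (∑ i, (r • c i) • g i) = r • ∑ i, c i • g i
        rw [Finset.smul_sum]
        exact Finset.sum_congr rfl fun i _ => by rw [smul_eq_mul, mul_smul] }
  have hFE : F.comp E = LinearMap.id := by
    ext h m
    show (∑ i : sF, h (i : M) • g i) m = h m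
    rw [LinearMap.sum_apply]
    calc (∑ i : sF, (h (i : M) • g i) m) = ∑ i : sF, h (op ((g i) m) • (i : M)) := by
          refine Finset.sum_congr rfl fun i _ => ?_
          rw [LinearMap.smul_apply, smul_eq_mul,
            LinearMap.map_smul h (op ((g i) m)) (i : M), MulOpposite.smul_eq_mul_unop, unop_op]
      _ = h m := by rw [← map_sum, hdb]
  exact Module.Projective.of_split E F hFE

variable (T R M) in
/-- The left `T`-module structure on `Hom_R(M^*, N)` by precomposition with the right
`T`-action on `M^*`. -/
def homModT (N : Type*) [AddCommGroup N] [Module R N] : Module T (RDual R M →ₗ[R] N) where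
  smul t φ :=
    { toFun := fun h => φ (RDual.rT t h)
      map_add' := fun a b => by
        show φ (RDual.rT t (a + b)) = φ (RDual.rT t a) + φ (RDual.rT t b)
        have hr : RDual.rT t (a + b) = RDual.rT t a + RDual.rT t b := by
          ext m; show (a + b) (t • m) = a (t • m) + b (t • m); rw [LinearMap.add_apply]
        rw [hr, map_add]
      map_smul' := fun r h => by
        show φ (RDual.rT t (r • h)) = r • φ (RDual.rT t h)
        have hr : RDual.rT t (r • h) = r • RDual.rT t h := by
          ext m; show (r • h) (t • m) = r • h (t • m); rw [LinearMap.smul_apply]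
        rw [hr, map_smul] }
  one_smul φ := by
    ext h
    show φ (RDual.rT 1 h) = φ h
    congr 1; ext m; show h ((1 : T) • m) = h m; rw [one_smul]
  mul_smul t s φ := by
    ext h
    show φ (RDual.rT (t * s) h) = φ (RDual.rT s (RDual.rT t h))
    congr 1; ext m; show h ((t * s) • m) = h (t • s • m); rw [mul_smul]
  smul_zero t := by ext h; rfl
  smul_add t φ ψ := by ext h; rfl
  add_smul t s φ := by
    ext h
    show φ (RDual.rT (t + s) h) = φ (RDual.rT t h) + φ (RDual.rT s h)
    have hr : RDual.rT (t + s) h = RDual.rT t h + RDual.rT s h := by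
      ext m; show h ((t + s) • m) = h (t • m) + h (s • m); rw [add_smul, map_add]
    rw [hr, map_add]
  zero_smul φ := by
    ext h
    show φ (RDual.rT 0 h) = 0
    have hr : RDual.rT (0 : T) h = 0 := by
      ext m; show h ((0 : T) • m) = 0; rw [zero_smul, map_zero]
    rw [hr, map_zero]

theorem dir2 (hfin : Module.Finite Rᵐᵒᵖ M) (hproj : Module.Projective Rᵐᵒᵖ M)
    (hsep : IsSepRDual T R M) (hT : IsSemisimpleRing T) : IsSemisimpleRing R := by
  obtain ⟨n, hh, mm, h1, hc⟩ := hsep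
  haveI hP : Module.Projective R (RDual R M) := rdualProjective hfin hproj
  refine { exists_isCompl := fun L => ?_ }
  letI : Module T (RDual R M →ₗ[R] R) := homModT T R M R
  letI : Module T (RDual R M →ₗ[R] (R ⧸ L)) := homModT T R M (R ⧸ L)
  let q : (RDual R M →ₗ[R] R) →ₗ[T] (RDual R M →ₗ[R] (R ⧸ L)) :=
    { toFun := fun g => L.mkQ.comp g
      map_add' := fun g h => by ext m; simp
      map_smul' := fun t g => by ext h; rfl }
  have hqsurj : Function.Surjective q := fun φ =>
    Module.projective_lifting_property L.mkQ φ (Submodule.mkQ_surjective L)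
  obtain ⟨σ, hσ⟩ := splitSurj q hqsurj
  let Φ : (R ⧸ L) → M → (RDual R M →ₗ[R] (R ⧸ L)) := fun nn x =>
    { toFun := fun h => h x • nn
      map_add' := fun a b => by
        show (a + b) x • nn = a x • nn + b x • nn
        rw [LinearMap.add_apply, add_smul]
      map_smul' := fun r h => by
        show (r • h) x • nn = r • (h x • nn)
        rw [LinearMap.smul_apply, smul_eq_mul, mul_smul] }
  let s : (R ⧸ L) → R := fun nn => ∑ i, σ (Φ nn (mm i)) (hh i)
  have hps : ∀ nn, L.mkQ (s nn) = nn := by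
    intro nn
    have hq' : L.mkQ (s nn) = ∑ i, (q (σ (Φ nn (mm i)))) (hh i) := by
      simp only [s, map_sum]; rfl
    rw [hq']
    simp only [hσ]
    show (∑ i, (hh i) (mm i) • nn) = nn
    rw [← Finset.sum_smul, h1, one_smul]
  have hadd : ∀ a b, s (a + b) = s a + s b := by
    intro a b
    have hΦ : ∀ x, Φ (a + b) x = Φ a x + Φ b x := by
      intro x; ext h
      show h x • (a + b) = h x • a + h x • b
      rw [smul_add]
    simp only [s, hΦ, map_add, LinearMap.add_apply, Finset.sum_add_distrib]
  have hsmul : ∀ (r : R) nn, s (r • nn) = r • s nn := by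
    intro r nn
    have key := hc (ULift.{max u w} R)
      (fun hhh x => ULift.up ((σ (Φ nn x)) hhh))
      (fun x y hhh => by
        show ULift.up ((σ (Φ nn hhh)) (x + y)) =
          ULift.up ((σ (Φ nn hhh)) x) + ULift.up ((σ (Φ nn hhh)) y)
        rw [map_add]; rfl)
      (fun x hhh hhh' => by
        show ULift.up ((σ (Φ nn (hhh + hhh'))) x) =
          ULift.up ((σ (Φ nn hhh)) x) + ULift.up ((σ (Φ nn hhh')) x)
        have hΦ : Φ nn (hhh + hhh') = Φ nn hhh + Φ nn hhh' := by
          ext h; show h (hhh + hhh') • nn = h hhh • nn + h hhh' • nn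
          rw [map_add, add_smul]
        rw [hΦ, map_add, LinearMap.add_apply]; rfl)
      (fun t x hhh => by
        show ULift.up ((σ (Φ nn hhh)) (RDual.rT t x)) =
          ULift.up ((σ (Φ nn (t • hhh))) x)
        have hΦ : Φ nn (t • hhh) = t • Φ nn hhh := by
          ext h; rfl
        rw [hΦ, LinearMap.map_smul σ t (Φ nn hhh)]; rfl)
      r
    have keyd : (∑ i, (σ (Φ nn (mm i))) (RDual.lR r (hh i))) =
        ∑ i, (σ (Φ nn (op r • mm i))) (hh i) := by
      have h2 := congrArg (⇑(AddEquiv.ulift (α := R))) key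
      simp only [map_sum] at h2; exact h2
    have hL : (∑ i, (σ (Φ nn (mm i))) (RDual.lR r (hh i))) = r • s nn := by
      rw [Finset.smul_sum]
      exact Finset.sum_congr rfl fun i _ => by
        rw [RDual.lR_eq_smul, map_smul]
    have hR' : (∑ i, (σ (Φ nn (op r • mm i))) (hh i)) = s (r • nn) := by
      have hΦ : ∀ i, Φ nn (op r • mm i) = Φ (r • nn) (mm i) := by
        intro i; ext h
        show h (op r • mm i) • nn = h (mm i) • (r • nn)
        rw [LinearMap.map_smul h (op r) (mm i), MulOpposite.smul_eq_mul_unop, unop_op, mul_smul]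
      simp only [hΦ]; rfl
    rw [← hR', ← keyd, hL]
  let sl : (R ⧸ L) →ₗ[R] R :=
    { toFun := s
      map_add' := hadd
      map_smul' := fun r nn => by simpa using hsmul r nn }
  obtain ⟨C, hC⟩ := complOfSection L sl hps
  exact ⟨C, hC⟩

end Dir2

end Aux

/-- If `M` is a biseparable `(T,R)`-bimodule, then `T` is semisimple if and
only if `R` is semisimple. -/
theorem biseparable_stmt6 {T R M : Type*} [Ring T] [Ring R]
    [AddCommGroup M] [Module T M] [Module Rᵐᵒᵖ M] [SMulCommClass T Rᵐᵒᵖ M]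
    (hbisep : IsBisep T R M) :
    IsSemisimpleRing T ↔ IsSemisimpleRing R := by
  obtain ⟨⟨hTfin, hTproj⟩, ⟨hRfin, hRproj⟩, hsepM, hsepD⟩ := hbisep
  exact ⟨fun hT => dir2 hRfin hRproj hsepD hT, fun hR => dir1 hTproj hsepM hR⟩
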